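/- Let J ⊆ I ⊆ {1,…,p} with ω_I nonempty. If the images of A_I and A_J (as linear maps ℚⁿ → ℚ^{|I|} resp. ℚ^{|J|}) have the same codimension, then ω_J is nonempty. -/

import Mathlib

set_option synthInstance.maxHeartbeats 400000


/-- The affine family of right-hand sides `D(δ,ε) = (1-δ)B + δB' + εC`. -/
def Dvec {p : ℕ} (B B' C : Fin p → ℚ) (q : ℚ × ℚ) : Fin p → ℚ :=
  fun i => (1 - q.1) * B i + q.1 * B' i + q.2 * C i

/-- `Ω_I`: parameters `(δ,ε)` such that the face `F_I` of the polyhedron is nonempty. -/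
def bigOmega {p n : ℕ} (A : Matrix (Fin p) (Fin n) ℚ) (B B' C : Fin p → ℚ)
    (I : Set (Fin p)) : Set (ℚ × ℚ) :=
  {q | ∃ x : Fin n → ℚ, (∀ i ∈ I, A.mulVec x i = Dvec B B' C q i) ∧
        ∀ i, Dvec B B' C q i ≤ A.mulVec x i}

/-- `ω_I`: parameters `(δ,ε)` with a point satisfying the equalities indexed by `I`
and strict inequalities elsewhere. -/
def smallOmega {p n : ℕ} (A : Matrix (Fin p) (Fin n) ℚ) (B B' C : Fin p → ℚ)
    (I : Set (Fin p)) : Set (ℚ × ℚ) :=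
  {q | ∃ x : Fin n → ℚ, (∀ i ∈ I, A.mulVec x i = Dvec B B' C q i) ∧
        ∀ j ∉ I, Dvec B B' C q j < A.mulVec x j}
/-- The submatrix of `A` given by the rows indexed by the finite set `I`,
viewed as a linear map `ℚⁿ → ℚ^I` via `mulVec`. -/
def rowsub {p n : ℕ} (A : Matrix (Fin p) (Fin n) ℚ) (I : Finset (Fin p)) :
    Matrix {i // i ∈ I} (Fin n) ℚ :=
  A.submatrix (fun i => (i : Fin p)) id

set_option maxHeartbeats 1000000 in
lemma key_dir (p n : ℕ) (A : Matrix (Fin p) (Fin n) ℚ) (I J : Finset (Fin p)) (hJI : J ⊆ I)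
    (hcodim : I.card - (rowsub A I).rank = J.card - (rowsub A J).rank) :
    ∃ y : Fin n → ℚ, (∀ j ∈ J, A.mulVec y j = 0) ∧ (∀ i ∈ I, i ∉ J → A.mulVec y i = 1) := by
  classical
  set f := (rowsub A I).mulVecLin with hf
  set π : ({i // i ∈ I} → ℚ) →ₗ[ℚ] ({j // j ∈ J} → ℚ) :=
    LinearMap.funLeft ℚ ℚ (fun j => ⟨(j : Fin p), hJI j.2⟩) with hπ
  have hcomp : π.comp f = (rowsub A J).mulVecLin := by
    ext x j
    simp [hπ, hf, rowsub, LinearMap.funLeft, Matrix.mulVecLin, Matrix.mulVec, Matrix.submatrix]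
  have hπsurj : Function.Surjective π :=
    LinearMap.funLeft_surjective_of_injective ℚ ℚ _
      (fun a b hab => Subtype.ext (by simpa using congrArg Subtype.val hab))
  set W := LinearMap.range f with hW
  set K := LinearMap.ker π with hK
  have hcardI : Module.finrank ℚ ({i // i ∈ I} → ℚ) = I.card := by
    simp [Module.finrank_pi, Fintype.card_coe]
  have hcardJ : Module.finrank ℚ ({j // j ∈ J} → ℚ) = J.card := by
    simp [Module.finrank_pi, Fintype.card_coe]
  have hrange : LinearMap.range π = ⊤ := LinearMap.range_eq_top.2 hπsurj
  have e2 : J.card + Module.finrank ℚ ↥K = I.card := by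
    have h := LinearMap.finrank_range_add_finrank_ker π
    rw [hrange, finrank_top, hcardI, hcardJ] at h
    rw [hK]; exact h
  -- rank-nullity for π restricted to W
  set φ := π.comp W.subtype with hφ
  have hrnφ := LinearMap.finrank_range_add_finrank_ker φ
  have hrφ : LinearMap.range φ = Submodule.map π W := by
    rw [hφ, LinearMap.range_comp, Submodule.range_subtype]
  have hmapW : Submodule.map π W = LinearMap.range ((rowsub A J).mulVecLin) := by
    rw [← hcomp, LinearMap.range_comp]
  have hkφ : Module.finrank ℚ (LinearMap.ker φ) = Module.finrank ℚ ↥(W ⊓ K) := by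
    have hmk : Submodule.map W.subtype (LinearMap.ker φ) = W ⊓ K := by
      rw [hφ, LinearMap.ker_comp, Submodule.map_comap_subtype]
    rw [← hmk]
    exact (Submodule.equivMapOfInjective W.subtype (Submodule.injective_subtype W)
      (LinearMap.ker φ)).finrank_eq
  have hrI : (rowsub A I).rank = Module.finrank ℚ W := rfl
  have hrJ : (rowsub A J).rank = Module.finrank ℚ (Submodule.map π W) := by
    rw [hmapW]; rfl
  have hleI : (rowsub A I).rank ≤ I.card := by
    simpa [Fintype.card_coe] using Matrix.rank_le_card_height (rowsub A I)
  have hleJ : (rowsub A J).rank ≤ J.card := by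
    simpa [Fintype.card_coe] using Matrix.rank_le_card_height (rowsub A J)
  have hJIcard : J.card ≤ I.card := Finset.card_le_card hJI
  have hWKle : Module.finrank ℚ ↥(W ⊓ K) ≤ Module.finrank ℚ K :=
    Submodule.finrank_mono inf_le_right
  rw [hrφ, hkφ] at hrnφ
  have e1 : (rowsub A J).rank + Module.finrank ℚ ↥(W ⊓ K) = (rowsub A I).rank := by
    rw [hrI, hrJ]; exact hrnφ
  have hd : Module.finrank ℚ ↥(W ⊓ K) = Module.finrank ℚ K := by omega
  have hKW : K ≤ W := by
    have heq := Submodule.eq_of_le_of_finrank_eq (inf_le_right : W ⊓ K ≤ K) hd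
    exact inf_eq_right.mp heq
  -- the indicator vector
  set w : {i // i ∈ I} → ℚ := fun i => if (i : Fin p) ∈ J then 0 else 1 with hw
  have hwK : w ∈ K := by
    rw [hK, LinearMap.mem_ker]
    funext j
    simp [hπ, LinearMap.funLeft, hw, j.2]
  obtain ⟨y, hy⟩ := hKW hwK
  refine ⟨y, ?_, ?_⟩
  · intro j hj
    have := congrFun hy ⟨j, hJI hj⟩
    simpa [hf, rowsub, Matrix.mulVecLin, Matrix.submatrix, hw, hj, Matrix.mulVec, dotProduct] using this
  · intro i hi hiJ
    have := congrFun hy ⟨i, hi⟩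
    simpa [hf, rowsub, Matrix.mulVecLin, Matrix.submatrix, hw, hiJ, Matrix.mulVec, dotProduct] using this

set_option maxHeartbeats 1000000 in
theorem stmt_8' (p n : ℕ) (A : Matrix (Fin p) (Fin n) ℚ) (B B' C : Fin p → ℚ)
    (I J : Finset (Fin p)) (hJI : J ⊆ I)
    (hne : (smallOmega A B B' C (I : Set (Fin p))).Nonempty)
    (key : ∃ y : Fin n → ℚ, (∀ j ∈ J, A.mulVec y j = 0) ∧
      (∀ i ∈ I, i ∉ J → A.mulVec y i = 1)) :
    (smallOmega A B B' C (J : Set (Fin p))).Nonempty := by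
  classical
  obtain ⟨q, x, hxI, hxO⟩ := hne
  obtain ⟨y, hyJ, hyI⟩ := key
  set εs : Fin p → ℚ := fun j =>
    (A.mulVec x j - Dvec B B' C q j) / (1 + |A.mulVec y j|) with hεs
  have hts : ∃ t : ℚ, 0 < t ∧ ∀ j ∉ I, t ≤ εs j := by
    have hTne : (insert (1:ℚ) ((Finset.univ.filter (fun j => j ∉ I)).image εs)).Nonempty :=
      ⟨1, Finset.mem_insert_self _ _⟩
    refine ⟨(insert (1:ℚ) ((Finset.univ.filter (fun j => j ∉ I)).image εs)).min' hTne, ?_, ?_⟩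
    · have hmem := Finset.min'_mem _ hTne
      rw [Finset.mem_insert] at hmem
      rcases hmem with h1 | h2
      · rw [h1]; norm_num
      · rw [Finset.mem_image] at h2
        obtain ⟨j, hj, hje⟩ := h2
        rw [Finset.mem_filter] at hj
        have hnum : 0 < A.mulVec x j - Dvec B B' C q j := sub_pos.2 (hxO j (by simpa using hj.2))
        have hden : 0 < 1 + |A.mulVec y j| := by positivity
        rw [← hje]
        exact div_pos hnum hden
    · intro j hjI
      apply Finset.min'_le
      exact Finset.mem_insert_of_mem (Finset.mem_image.2 ⟨j, Finset.mem_filter.2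
        ⟨Finset.mem_univ _, hjI⟩, rfl⟩)
  obtain ⟨t, ht0, htle'⟩ := hts
  refine ⟨q, fun k => x k + t * y k, ?_, ?_⟩
  · intro j hj
    have hj' : j ∈ J := by simpa using hj
    have : A.mulVec (fun k => x k + t * y k) j = A.mulVec x j + t * A.mulVec y j := by
      have hfun : (fun k => x k + t * y k) = x + t • y := by
        funext k; simp [smul_eq_mul]
      rw [hfun, Matrix.mulVec_add, Matrix.mulVec_smul]; simp [smul_eq_mul]
    rw [this, hyJ j hj', hxI j (hJI hj'), mul_zero, add_zero]
  · intro j hj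
    have hj' : j ∉ J := by simpa using hj
    have hmv : A.mulVec (fun k => x k + t * y k) j = A.mulVec x j + t * A.mulVec y j := by
      have hfun : (fun k => x k + t * y k) = x + t • y := by
        funext k; simp [smul_eq_mul]
      rw [hfun, Matrix.mulVec_add, Matrix.mulVec_smul]; simp [smul_eq_mul]
    rw [hmv]
    by_cases hjI : j ∈ I
    · rw [hyI j hjI hj', hxI j hjI]
      linarith
    · have hstrict := hxO j (by simpa using hjI)
      have htle : t ≤ εs j := htle' j hjI
      have hden : (0:ℚ) < 1 + |A.mulVec y j| := by positivity
      have hεval : εs j * (1 + |A.mulVec y j|) = A.mulVec x j - Dvec B B' C q j := by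
        rw [hεs]; field_simp
      have habs : -|A.mulVec y j| ≤ A.mulVec y j := neg_abs_le _
      have h0abs : 0 ≤ |A.mulVec y j| := abs_nonneg _
      nlinarith [mul_le_mul_of_nonneg_right htle (le_of_lt hden),
        mul_le_mul_of_nonneg_left habs (le_of_lt ht0)]

/-- If `J ⊆ I`, `ω_I` is nonempty and the images of `A_I` and `A_J` have the
same codimension, then `ω_J` is nonempty. -/
theorem stmt_8 (p n : ℕ) (A : Matrix (Fin p) (Fin n) ℚ) (B B' C : Fin p → ℚ)
    (I J : Finset (Fin p)) (hJI : J ⊆ I)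
    (hne : (smallOmega A B B' C (I : Set (Fin p))).Nonempty)
    (hcodim : I.card - (rowsub A I).rank = J.card - (rowsub A J).rank) :
    (smallOmega A B B' C (J : Set (Fin p))).Nonempty :=
  stmt_8' p n A B B' C I J hJI hne (key_dir p n A I J hJI hcodim)
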